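/- Let k be algebraically closed of characteristic p > 0 and q a power of p, n ≥ 2. The projective automorphism group of the hypersurface X_{n-1} ⊂ P^n defined by x_0^{q+1} + ... + x_{n-2}^{q+1} + x_{n-1}^q x_n = 0 equals the set of classes [M] of block diagonal matrices M = diag(T_{n-1}, β, 1) with T_{n-1} ∈ GL_{n-1}(k), β ∈ k^×, satisfying ᵗT_{n-1} T_{n-1}^(q) = β^q I_{n-1}. -/

import Mathlib

open Matrix

/-- The matrix `W_s = diag(I_s, E_{n-s+1})`. -/
def Wmat (k : Type*) [Field k] (n s : ℕ) : Matrix (Fin (n + 1)) (Fin (n + 1)) k :=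
  fun i j =>
    (if i = j ∧ (j : ℕ) < s then 1 else 0) +
    (if (i : ℕ) = (j : ℕ) + 1 ∧ s ≤ (j : ℕ) then 1 else 0)

/-- index `n-1` as an element of `Fin (n+1)` (with `n = m+2`). -/
def fn1 (m : ℕ) : Fin (m + 3) := ⟨m + 1, by omega⟩

/-- index `n` as an element of `Fin (n+1)` (with `n = m+2`). -/
def fn2 (m : ℕ) : Fin (m + 3) := ⟨m + 2, by omega⟩

lemma fn1_val (m : ℕ) : (fn1 m : ℕ) = m + 1 := rfl

lemma fn2_val (m : ℕ) : (fn2 m : ℕ) = m + 2 := rfl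

/-- embedding `Fin (m+1) → Fin (m+3)`. -/
@[reducible] def emb (m : ℕ) (b : Fin (m + 1)) : Fin (m + 3) := ⟨b.1, by omega⟩

lemma sum_lt_eq {k : Type*} [Field k] (m : ℕ) (f : Fin (m + 3) → k) :
    (∑ a : Fin (m + 3), if (a : ℕ) < m + 1 then f a else 0)
      = ∑ b : Fin (m + 1), f (emb m b) := by
  have h1 : (∑ a : Fin (m + 3), if (a : ℕ) < m + 1 then f a else 0)
      = ∑ t ∈ Finset.range (m + 3),
          (if h : t < m + 3 then (if t < m + 1 then f ⟨t, h⟩ else 0) else 0) := by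
    rw [← Fin.sum_univ_eq_sum_range
      (fun t => if h : t < m + 3 then (if t < m + 1 then f ⟨t, h⟩ else 0) else 0) (m + 3)]
    refine Finset.sum_congr rfl fun a _ => ?_
    rw [dif_pos a.isLt]
  have h2 : (∑ b : Fin (m + 1), f (emb m b))
      = ∑ t ∈ Finset.range (m + 1),
          (if h : t < m + 3 then (if t < m + 1 then f ⟨t, h⟩ else 0) else 0) := by
    rw [← Fin.sum_univ_eq_sum_range
      (fun t => if h : t < m + 3 then (if t < m + 1 then f ⟨t, h⟩ else 0) else 0) (m + 1)]
    refine Finset.sum_congr rfl fun b _ => ?_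
    rw [dif_pos (show (b : ℕ) < m + 3 by omega), if_pos b.isLt]
  rw [h1, h2]
  refine (Finset.sum_subset (Finset.range_subset_range.2 (by omega)) fun t ht hnt => ?_).symm
  rw [Finset.mem_range] at ht
  rw [Finset.mem_range] at hnt
  rw [dif_pos ht, if_neg (by omega)]

lemma W_eval {k : Type*} [Field k] (m : ℕ) (i j : Fin (m + 3)) :
    Wmat k (m + 2) (m + 1) i j =
      (if i = j ∧ (j : ℕ) < m + 1 then 1 else 0) +
      (if (i : ℕ) = m + 2 ∧ (j : ℕ) = m + 1 then 1 else 0) := by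
  simp only [Wmat]
  congr 1
  by_cases h : (i : ℕ) = m + 2 ∧ (j : ℕ) = m + 1
  · rw [if_pos (by omega), if_pos h]
  · rw [if_neg (by have hi := i.isLt; have hj := j.isLt; omega), if_neg h]

lemma W_col {k : Type*} [Field k] (m : ℕ) (b : Fin (m + 3)) :
    Wmat k (m + 2) (m + 1) b (fn2 m) = 0 := by
  rw [W_eval,
    if_neg (by rintro ⟨-, h2⟩; simp only [fn2_val] at h2; omega),
    if_neg (by rintro ⟨-, h2⟩; simp only [fn2_val] at h2; omega), add_zero]

lemma W_row {k : Type*} [Field k] (m : ℕ) (c : Fin (m + 3)) :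
    Wmat k (m + 2) (m + 1) (fn1 m) c = 0 := by
  rw [W_eval,
    if_neg (by
      rintro ⟨h1, h2⟩
      have h3 := congrArg Fin.val h1
      simp only [fn1_val] at h3
      omega),
    if_neg (by rintro ⟨h1, -⟩; simp only [fn1_val] at h1; omega), add_zero]

lemma W_mul_apply {k : Type*} [Field k] (m : ℕ) (N : Matrix (Fin (m + 3)) (Fin (m + 3)) k)
    (a j : Fin (m + 3)) :
    (Wmat k (m + 2) (m + 1) * N) a j =
      (if (a : ℕ) < m + 1 then N a j else 0) +
      (if (a : ℕ) = m + 2 then N (fn1 m) j else 0) := by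
  rw [Matrix.mul_apply]
  have h : ∀ b : Fin (m + 3), Wmat k (m + 2) (m + 1) a b * N b j =
      (if a = b ∧ (b : ℕ) < m + 1 then N b j else 0) +
      (if (a : ℕ) = (b : ℕ) + 1 ∧ m + 1 ≤ (b : ℕ) then N b j else 0) := by
    intro b
    simp only [Wmat, add_mul]
    congr 1 <;> (split_ifs <;> simp)
  simp only [h]
  rw [Finset.sum_add_distrib]
  congr 1
  · have hz : ∀ bb : Fin (m + 3), bb ≠ a →
        (if a = bb ∧ (bb : ℕ) < m + 1 then N bb j else 0) = 0 :=
      fun bb hbb => if_neg (fun hx => hbb hx.1.symm)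
    rw [Fintype.sum_eq_single a hz]
    by_cases hh : (a : ℕ) < m + 1
    · rw [if_pos ⟨rfl, hh⟩, if_pos hh]
    · rw [if_neg (fun hx => hh hx.2), if_neg hh]
  · have hz : ∀ bb : Fin (m + 3), bb ≠ fn1 m →
        (if (a : ℕ) = (bb : ℕ) + 1 ∧ m + 1 ≤ (bb : ℕ) then N bb j else 0) = 0 := by
      intro bb hbb
      refine if_neg ?_
      rintro ⟨h1, h2⟩
      have hb2 : (bb : ℕ) ≠ m + 1 := fun hx => hbb (Fin.ext hx)
      have hb3 := bb.isLt
      have ha3 := a.isLt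
      omega
    rw [Fintype.sum_eq_single (fn1 m) hz]
    simp only [fn1_val]
    by_cases hh : (a : ℕ) = m + 2
    · rw [if_pos hh]; exact if_pos ⟨by omega, by omega⟩
    · rw [if_neg hh]; exact if_neg (by rintro ⟨h1, -⟩; omega)

lemma Wt_mul_apply {k : Type*} [Field k] (m : ℕ) (A : Matrix (Fin (m + 3)) (Fin (m + 3)) k)
    (b j : Fin (m + 3)) :
    ((Wmat k (m + 2) (m + 1))ᵀ * A) b j =
      (if (b : ℕ) < m + 1 then A b j else 0) +
      (if (b : ℕ) = m + 1 then A (fn2 m) j else 0) := by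
  rw [Matrix.mul_apply]
  simp only [Matrix.transpose_apply]
  have h : ∀ c : Fin (m + 3), Wmat k (m + 2) (m + 1) c b * A c j =
      (if c = b ∧ (b : ℕ) < m + 1 then A c j else 0) +
      (if (c : ℕ) = (b : ℕ) + 1 ∧ m + 1 ≤ (b : ℕ) then A c j else 0) := by
    intro c
    simp only [Wmat, add_mul]
    congr 1 <;> (split_ifs <;> simp)
  simp only [h]
  rw [Finset.sum_add_distrib]
  congr 1
  · have hz : ∀ c : Fin (m + 3), c ≠ b →
        (if c = b ∧ (b : ℕ) < m + 1 then A c j else 0) = 0 :=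
      fun c hc => if_neg (fun hx => hc hx.1)
    rw [Fintype.sum_eq_single b hz]
    by_cases hh : (b : ℕ) < m + 1
    · rw [if_pos ⟨rfl, hh⟩, if_pos hh]
    · rw [if_neg (fun hx => hh hx.2), if_neg hh]
  · have hz : ∀ c : Fin (m + 3), c ≠ fn2 m →
        (if (c : ℕ) = (b : ℕ) + 1 ∧ m + 1 ≤ (b : ℕ) then A c j else 0) = 0 := by
      intro c hc
      refine if_neg ?_
      rintro ⟨h1, h2⟩
      have hc2 : (c : ℕ) ≠ m + 2 := fun hx => hc (Fin.ext hx)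
      have hb3 := b.isLt
      have hc3 := c.isLt
      omega
    rw [Fintype.sum_eq_single (fn2 m) hz]
    simp only [fn2_val]
    by_cases hh : (b : ℕ) = m + 1
    · rw [if_pos hh]; exact if_pos ⟨by omega, by omega⟩
    · rw [if_neg hh]; exact if_neg (by rintro ⟨h1, -⟩; omega)

lemma triple_apply {k : Type*} [Field k] (m : ℕ)
    (A N : Matrix (Fin (m + 3)) (Fin (m + 3)) k) (i j : Fin (m + 3)) :
    (Aᵀ * Wmat k (m + 2) (m + 1) * N) i j =
      (∑ a : Fin (m + 3), if (a : ℕ) < m + 1 then A a i * N a j else 0) +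
      A (fn2 m) i * N (fn1 m) j := by
  rw [Matrix.mul_assoc, Matrix.mul_apply]
  have h : ∀ a : Fin (m + 3), Aᵀ i a * (Wmat k (m + 2) (m + 1) * N) a j =
      (if (a : ℕ) < m + 1 then A a i * N a j else 0) +
      (if (a : ℕ) = m + 2 then A a i * N (fn1 m) j else 0) := by
    intro a
    rw [Matrix.transpose_apply, W_mul_apply, mul_add]
    congr 1 <;> (split_ifs <;> simp)
  simp only [h]
  rw [Finset.sum_add_distrib]
  congr 1
  have hz : ∀ a : Fin (m + 3), a ≠ fn2 m →
      (if (a : ℕ) = m + 2 then A a i * N (fn1 m) j else 0) = 0 :=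
    fun a ha => if_neg (fun hx => ha (Fin.ext hx))
  rw [Fintype.sum_eq_single (fn2 m) hz, if_pos (fn2_val m)]

lemma det_map_frob {k : Type*} [Field k] (p e : ℕ) [Fact p.Prime] [CharP k p]
    {r : ℕ} (A : Matrix (Fin r) (Fin r) k) :
    (A.map fun x => x ^ p ^ e).det = A.det ^ p ^ e := by
  have h : (fun x : k => x ^ p ^ e) = ⇑(iterateFrobenius k p e) := by
    funext x; rw [iterateFrobenius_def]
  rw [h, ← RingHom.mapMatrix_apply, ← RingHom.map_det, iterateFrobenius_def]

/-- `Aut(X_{n-1})`: an invertible matrix `M` represents a projective automorphism of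
`X_{n-1} : x₀^{q+1} + ⋯ + x_{n-2}^{q+1} + x_{n-1}^q x_n = 0` iff `M` is a scalar `c`
times a block diagonal matrix `diag(T_{n-1}, β, 1)` with `T_{n-1} ∈ GL_{n-1}(k)`,
`β ≠ 0`, and `ᵗT_{n-1} T_{n-1}^{(q)} = β^q I_{n-1}`. -/
theorem aut_Xn_minus_one (p q e n : ℕ) (hp : p.Prime) (he : 0 < e) (hq : q = p ^ e)
    (k : Type*) [Field k] [IsAlgClosed k] [CharP k p] (hn : 2 ≤ n)
    (M : Matrix (Fin (n + 1)) (Fin (n + 1)) k) (hM : IsUnit M.det) :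
    (∃ δ : k, δ ≠ 0 ∧
        Mᵀ * Wmat k n (n - 1) * M.map (fun x => x ^ q) = δ • Wmat k n (n - 1)) ↔
      (∃ (c β : k) (T : Matrix (Fin (n - 1)) (Fin (n - 1)) k),
        c ≠ 0 ∧ β ≠ 0 ∧ IsUnit T.det ∧
        Tᵀ * T.map (fun x => x ^ q) = β ^ q • (1 : Matrix (Fin (n - 1)) (Fin (n - 1)) k) ∧
        ∀ i j : Fin (n + 1), M i j =
          c * (if h : (i : ℕ) < n - 1 ∧ (j : ℕ) < n - 1 then T ⟨i, h.1⟩ ⟨j, h.2⟩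
            else if (i : ℕ) = n - 1 ∧ (j : ℕ) = n - 1 then β
            else if (i : ℕ) = n ∧ (j : ℕ) = n then 1
            else 0)) := by
  haveI : Fact p.Prime := ⟨hp⟩
  have hq1 : 0 < q := hq ▸ pow_pos hp.pos e
  have hq0 : q ≠ 0 := hq1.ne'
  obtain ⟨m, rfl⟩ : ∃ m, n = m + 2 := ⟨n - 2, by omega⟩
  have hmapdet : ∀ (r : ℕ) (A : Matrix (Fin r) (Fin r) k),
      (A.map fun x => x ^ q).det = A.det ^ q := by
    intro r A
    rw [hq]
    exact det_map_frob p e A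
  show (∃ δ : k, δ ≠ 0 ∧
        Mᵀ * Wmat k (m + 2) (m + 1) * M.map (fun x => x ^ q)
          = δ • Wmat k (m + 2) (m + 1)) ↔
      (∃ (c β : k) (T : Matrix (Fin (m + 1)) (Fin (m + 1)) k),
        c ≠ 0 ∧ β ≠ 0 ∧ IsUnit T.det ∧
        Tᵀ * T.map (fun x => x ^ q) = β ^ q • (1 : Matrix (Fin (m + 1)) (Fin (m + 1)) k) ∧
        ∀ i j : Fin (m + 3), M i j =
          c * (if h : (i : ℕ) < m + 1 ∧ (j : ℕ) < m + 1 then T ⟨i, h.1⟩ ⟨j, h.2⟩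
            else if (i : ℕ) = m + 1 ∧ (j : ℕ) = m + 1 then β
            else if (i : ℕ) = m + 2 ∧ (j : ℕ) = m + 2 then 1
            else 0))
  constructor
  · rintro ⟨δ, hδ0, hδ⟩
    have hE : ∀ i j : Fin (m + 3),
        (∑ a : Fin (m + 3), if (a : ℕ) < m + 1 then M a i * (M a j) ^ q else 0)
          + M (fn2 m) i * (M (fn1 m) j) ^ q = δ * Wmat k (m + 2) (m + 1) i j := by
      intro i j
      have h1 := triple_apply m M (M.map fun x => x ^ q) i j
      rw [hδ, Matrix.smul_apply, smul_eq_mul] at h1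
      simp only [Matrix.map_apply] at h1
      exact h1.symm
    have hMt : IsUnit (Mᵀ).det := by rwa [Matrix.det_transpose]
    have hNt : IsUnit ((M.map fun x => x ^ q)ᵀ).det := by
      rw [Matrix.det_transpose, hmapdet (m + 3) M]
      exact hM.pow q
    -- column n of M is concentrated at (n,n)
    have hcol2 : ∀ a : Fin (m + 3), (a : ℕ) ≠ m + 2 → M a (fn2 m) = 0 := by
      have h1 : Wmat k (m + 2) (m + 1) * (M.map fun x => x ^ q)
          = (Mᵀ)⁻¹ * (δ • Wmat k (m + 2) (m + 1)) := by
        rw [← hδ]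
        simp only [← Matrix.mul_assoc]
        rw [Matrix.nonsing_inv_mul _ hMt, Matrix.one_mul]
      have h2 : ∀ a : Fin (m + 3),
          (Wmat k (m + 2) (m + 1) * (M.map fun x => x ^ q)) a (fn2 m) = 0 := by
        intro a
        rw [h1, Matrix.mul_apply]
        refine Finset.sum_eq_zero fun b _ => ?_
        rw [Matrix.smul_apply, W_col, smul_zero, mul_zero]
      intro a ha
      rcases Nat.lt_or_ge (a : ℕ) (m + 1) with h | h
      · have h3 := h2 a
        rw [W_mul_apply, if_pos h, if_neg (by omega)] at h3
        simp only [Matrix.map_apply, add_zero] at h3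
        exact pow_eq_zero_iff hq0 |>.mp h3
      · have ha1 : (a : ℕ) = m + 1 := by have := a.isLt; omega
        have h4 := h2 (fn2 m)
        rw [W_mul_apply, if_neg (by simp only [fn2_val]; omega), if_pos (fn2_val m)] at h4
        simp only [Matrix.map_apply, zero_add] at h4
        rw [show a = fn1 m from Fin.ext (show (a : ℕ) = m + 1 from ha1)]
        exact pow_eq_zero_iff hq0 |>.mp h4
    -- column n-1 of M is concentrated at (n-1,n-1)
    have hcol1 : ∀ a : Fin (m + 3), (a : ℕ) ≠ m + 1 → M a (fn1 m) = 0 := by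
      have hδt : (M.map fun x => x ^ q)ᵀ * (Wmat k (m + 2) (m + 1))ᵀ * M
          = δ • (Wmat k (m + 2) (m + 1))ᵀ := by
        have h := congrArg Matrix.transpose hδ
        simp only [Matrix.transpose_mul, Matrix.transpose_smul, Matrix.transpose_transpose] at h
        rw [← Matrix.mul_assoc] at h
        exact h
      have h1 : (Wmat k (m + 2) (m + 1))ᵀ * M
          = ((M.map fun x => x ^ q)ᵀ)⁻¹ * (δ • (Wmat k (m + 2) (m + 1))ᵀ) := by
        rw [← hδt]
        simp only [← Matrix.mul_assoc]
        rw [Matrix.nonsing_inv_mul _ hNt, Matrix.one_mul]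
      have h2 : ∀ b : Fin (m + 3), ((Wmat k (m + 2) (m + 1))ᵀ * M) b (fn1 m) = 0 := by
        intro b
        rw [h1, Matrix.mul_apply]
        refine Finset.sum_eq_zero fun c _ => ?_
        rw [Matrix.smul_apply, Matrix.transpose_apply, W_row, smul_zero, mul_zero]
      intro a ha
      rcases Nat.lt_or_ge (a : ℕ) (m + 1) with h | h
      · have h3 := h2 a
        rw [Wt_mul_apply, if_pos h, if_neg (by omega), add_zero] at h3
        exact h3
      · have ha1 : (a : ℕ) = m + 2 := by have := a.isLt; omega
        have h4 := h2 (fn1 m)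
        rw [Wt_mul_apply, if_neg (by simp only [fn1_val]; omega), if_pos (fn1_val m), zero_add] at h4
        rw [show a = fn2 m from Fin.ext (show (a : ℕ) = m + 2 from ha1)]
        exact h4
    have hν : M (fn1 m) (fn1 m) ≠ 0 := by
      intro h0
      apply hM.ne_zero
      apply Matrix.det_eq_zero_of_column_eq_zero (fn1 m)
      intro a
      rcases eq_or_ne ((a : ℕ)) (m + 1) with h | h
      · rwa [show a = fn1 m from Fin.ext h]
      · exact hcol1 a h
    have hWi1 : ∀ i : Fin (m + 3),
        Wmat k (m + 2) (m + 1) i (fn1 m) = if (i : ℕ) = m + 2 then 1 else 0 := by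
      intro i
      rw [W_eval, if_neg (by rintro ⟨-, h2⟩; simp only [fn1_val] at h2; omega), zero_add]
      by_cases h : (i : ℕ) = m + 2
      · rw [if_pos ⟨h, rfl⟩, if_pos h]
      · rw [if_neg (fun hh => h hh.1), if_neg h]
    have hWi2 : ∀ j : Fin (m + 3),
        Wmat k (m + 2) (m + 1) (fn2 m) j = if (j : ℕ) = m + 1 then 1 else 0 := by
      intro j
      rw [W_eval, if_neg (by
        rintro ⟨h1, h2⟩
        have h3 := congrArg Fin.val h1
        simp only [fn2_val] at h3
        omega), zero_add]
      by_cases h : (j : ℕ) = m + 1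
      · rw [if_pos ⟨rfl, h⟩, if_pos h]
      · rw [if_neg (fun hh => h hh.2), if_neg h]
    have hstepC : ∀ i : Fin (m + 3), M (fn2 m) i * (M (fn1 m) (fn1 m)) ^ q
        = δ * (if (i : ℕ) = m + 2 then 1 else 0) := by
      intro i
      have h := hE i (fn1 m)
      have hsum0 : (∑ a : Fin (m + 3),
          if (a : ℕ) < m + 1 then M a i * (M a (fn1 m)) ^ q else 0) = 0 := by
        refine Finset.sum_eq_zero fun a _ => ?_
        split_ifs with h'
        · rw [hcol1 a (by omega), zero_pow hq0, mul_zero]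
        · rfl
      rw [hsum0, zero_add, hWi1] at h
      exact h
    have hrow2 : ∀ i : Fin (m + 3), (i : ℕ) ≠ m + 2 → M (fn2 m) i = 0 := by
      intro i hi
      have h := hstepC i
      rw [if_neg hi, mul_zero] at h
      exact (mul_eq_zero.mp h).resolve_right (pow_ne_zero _ hν)
    have hμν : M (fn2 m) (fn2 m) * (M (fn1 m) (fn1 m)) ^ q = δ := by
      have h := hstepC (fn2 m)
      rwa [if_pos (fn2_val m), mul_one] at h
    have hμ : M (fn2 m) (fn2 m) ≠ 0 := by
      intro h0
      rw [h0, zero_mul] at hμν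
      exact hδ0 hμν.symm
    have hrow1 : ∀ j : Fin (m + 3), (j : ℕ) ≠ m + 1 → M (fn1 m) j = 0 := by
      intro j hj
      have h := hE (fn2 m) j
      have hsum0 : (∑ a : Fin (m + 3),
          if (a : ℕ) < m + 1 then M a (fn2 m) * (M a j) ^ q else 0) = 0 := by
        refine Finset.sum_eq_zero fun a _ => ?_
        split_ifs with h'
        · rw [hcol2 a (by omega), zero_mul]
        · rfl
      rw [hsum0, zero_add, hWi2, if_neg hj, mul_zero] at h
      exact pow_eq_zero_iff hq0 |>.mp ((mul_eq_zero.mp h).resolve_left hμ)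
    have hkey : ∀ i j : Fin (m + 3), (i : ℕ) < m + 1 → (j : ℕ) < m + 1 →
        (∑ b : Fin (m + 1), M (emb m b) i * (M (emb m b) j) ^ q)
          = δ * (if i = j then 1 else 0) := by
      intro i j hi hj
      have h := hE i j
      rw [hrow2 i (by omega), zero_mul, add_zero] at h
      have hW : Wmat k (m + 2) (m + 1) i j = if i = j then (1 : k) else 0 := by
        have hc2 : ¬((i : ℕ) = m + 2 ∧ (j : ℕ) = m + 1) := by omega
        rw [W_eval, if_neg hc2, add_zero]
        by_cases hh : i = j
        · rw [if_pos ⟨hh, hj⟩, if_pos hh]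
        · rw [if_neg (fun hx => hh hx.1), if_neg hh]
      rw [hW] at h
      exact (sum_lt_eq m (fun a => M a i * (M a j) ^ q)).symm.trans h
    obtain ⟨Tm, hTmdef⟩ : ∃ Tm : Matrix (Fin (m + 1)) (Fin (m + 1)) k,
        Tm = fun a b => M (emb m a) (emb m b) * (M (fn2 m) (fn2 m))⁻¹ := ⟨_, rfl⟩
    have hscal : δ * ((M (fn2 m) (fn2 m))⁻¹ * ((M (fn2 m) (fn2 m))⁻¹) ^ q)
        = (M (fn1 m) (fn1 m) * (M (fn2 m) (fn2 m))⁻¹) ^ q := by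
      rw [← hμν, mul_pow]
      rw [show M (fn2 m) (fn2 m) * M (fn1 m) (fn1 m) ^ q *
            ((M (fn2 m) (fn2 m))⁻¹ * ((M (fn2 m) (fn2 m))⁻¹) ^ q)
          = (M (fn2 m) (fn2 m) * (M (fn2 m) (fn2 m))⁻¹) *
            (M (fn1 m) (fn1 m) ^ q * ((M (fn2 m) (fn2 m))⁻¹) ^ q) from by ring,
        mul_inv_cancel₀ hμ, one_mul]
    have hTmul : Tmᵀ * Tm.map (fun x => x ^ q)
        = (M (fn1 m) (fn1 m) * (M (fn2 m) (fn2 m))⁻¹) ^ q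
            • (1 : Matrix (Fin (m + 1)) (Fin (m + 1)) k) := by
      ext i j
      have hk := hkey (emb m i) (emb m j) i.isLt j.isLt
      calc (Tmᵀ * Tm.map fun x => x ^ q) i j
          = ∑ b : Fin (m + 1), Tm b i * (Tm b j) ^ q := by
            rw [Matrix.mul_apply]
            rfl
        _ = (∑ b : Fin (m + 1), M (emb m b) (emb m i) *
              (M (emb m b) (emb m j)) ^ q) *
              ((M (fn2 m) (fn2 m))⁻¹ * ((M (fn2 m) (fn2 m))⁻¹) ^ q) := by
            rw [Finset.sum_mul]
            refine Finset.sum_congr rfl fun b _ => ?_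
            simp only [hTmdef]
            rw [mul_pow]
            ring
        _ = δ * (if emb m i = emb m j then 1 else 0) *
              ((M (fn2 m) (fn2 m))⁻¹ * ((M (fn2 m) (fn2 m))⁻¹) ^ q) := by
            exact congrArg (· * ((M (fn2 m) (fn2 m))⁻¹ * ((M (fn2 m) (fn2 m))⁻¹) ^ q)) hk
        _ = ((M (fn1 m) (fn1 m) * (M (fn2 m) (fn2 m))⁻¹) ^ q
              • (1 : Matrix (Fin (m + 1)) (Fin (m + 1)) k)) i j := by
            rw [Matrix.smul_apply, Matrix.one_apply, smul_eq_mul]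
            by_cases hh : i = j
            · rw [if_pos (show emb m i = emb m j from by rw [hh]), if_pos hh,
                mul_one, mul_one]
              exact hscal
            · rw [if_neg (show ¬(emb m i = emb m j) from
                  fun hx => hh (by rw [Fin.ext_iff] at hx ⊢; exact hx)), if_neg hh]
              simp
    have hTdet : IsUnit Tm.det := by
      rw [isUnit_iff_ne_zero]
      intro h0
      have hd := congrArg Matrix.det hTmul
      rw [Matrix.det_mul, Matrix.det_transpose, Matrix.det_smul, Matrix.det_one, mul_one,
        hmapdet (m + 1) Tm, h0, zero_mul] at hd
      exact pow_ne_zero _ (pow_ne_zero _ (mul_ne_zero hν (inv_ne_zero hμ))) hd.symm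
    refine ⟨M (fn2 m) (fn2 m), M (fn1 m) (fn1 m) * (M (fn2 m) (fn2 m))⁻¹, Tm, hμ,
      mul_ne_zero hν (inv_ne_zero hμ), hTdet, hTmul, ?_⟩
    intro i j
    by_cases h : (i : ℕ) < m + 1 ∧ (j : ℕ) < m + 1
    · rw [dif_pos h, hTmdef]
      show M i j = M (fn2 m) (fn2 m) * (M i j * (M (fn2 m) (fn2 m))⁻¹)
      rw [mul_comm (M i j), ← mul_assoc, mul_inv_cancel₀ hμ, one_mul]
    · rw [dif_neg h]
      by_cases h1 : (i : ℕ) = m + 1 ∧ (j : ℕ) = m + 1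
      · rw [if_pos h1, show i = fn1 m from Fin.ext h1.1, show j = fn1 m from Fin.ext h1.2,
          mul_comm (M (fn2 m) (fn2 m)), mul_assoc, inv_mul_cancel₀ hμ, mul_one]
      · rw [if_neg h1]
        by_cases h2 : (i : ℕ) = m + 2 ∧ (j : ℕ) = m + 2
        · rw [if_pos h2, mul_one, show i = fn2 m from Fin.ext h2.1,
            show j = fn2 m from Fin.ext h2.2]
        · rw [if_neg h2, mul_zero]
          have hi3 := i.isLt
          have hj3 := j.isLt
          rcases Nat.lt_or_ge (i : ℕ) (m + 1) with hi | hi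
          · rcases (show (j : ℕ) = m + 1 ∨ (j : ℕ) = m + 2 by omega) with hj | hj
            · rw [show j = fn1 m from Fin.ext hj]
              exact hcol1 i (by omega)
            · rw [show j = fn2 m from Fin.ext hj]
              exact hcol2 i (by omega)
          · rcases (show (i : ℕ) = m + 1 ∨ (i : ℕ) = m + 2 by omega) with hi' | hi'
            · rw [show i = fn1 m from Fin.ext hi']
              exact hrow1 j (by omega)
            · rw [show i = fn2 m from Fin.ext hi']
              exact hrow2 j (by omega)
  · rintro ⟨c, β, T, hc, hβ, hTdet, hTT, hform⟩
    refine ⟨c ^ (q + 1) * β ^ q,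
      mul_ne_zero (pow_ne_zero _ hc) (pow_ne_zero _ hβ), ?_⟩
    have hf2 : ∀ i : Fin (m + 3), M (fn2 m) i = if (i : ℕ) = m + 2 then c else 0 := by
      intro i
      rw [hform (fn2 m) i, dif_neg (by simp only [fn2_val]; omega),
        if_neg (by simp only [fn2_val]; omega)]
      by_cases h : (i : ℕ) = m + 2
      · rw [if_pos ⟨rfl, h⟩, if_pos h, mul_one]
      · rw [if_neg (fun hh => h hh.2), if_neg h, mul_zero]
    have hf1 : ∀ j : Fin (m + 3), M (fn1 m) j = if (j : ℕ) = m + 1 then c * β else 0 := by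
      intro j
      rw [hform (fn1 m) j, dif_neg (by simp only [fn1_val]; omega)]
      by_cases h : (j : ℕ) = m + 1
      · rw [if_pos ⟨rfl, h⟩, if_pos h]
      · rw [if_neg (fun hh => h hh.2), if_neg (by simp only [fn1_val]; omega),
          if_neg h, mul_zero]
    have hf0 : ∀ a i₀ : Fin (m + 3), (a : ℕ) < m + 1 → ¬((i₀ : ℕ) < m + 1) → M a i₀ = 0 := by
      intro a i₀ ha hi₀
      rw [hform a i₀, dif_neg (fun hh => hi₀ hh.2), if_neg (by omega), if_neg (by omega),
        mul_zero]
    have hfT : ∀ (a i₀ : Fin (m + 3)) (ha : (a : ℕ) < m + 1) (hi₀ : (i₀ : ℕ) < m + 1),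
        M a i₀ = c * T ⟨a, ha⟩ ⟨i₀, hi₀⟩ := by
      intro a i₀ ha hi₀
      rw [hform a i₀, dif_pos ⟨ha, hi₀⟩]
    ext i j
    rw [triple_apply, Matrix.smul_apply, smul_eq_mul]
    simp only [Matrix.map_apply]
    by_cases hij : (i : ℕ) < m + 1 ∧ (j : ℕ) < m + 1
    · have hs : (∑ a : Fin (m + 3), if (a : ℕ) < m + 1 then M a i * (M a j) ^ q else 0)
          = c ^ (q + 1) * β ^ q * (if i = j then 1 else 0) := by
        refine (sum_lt_eq m (fun a => M a i * (M a j) ^ q)).trans ?_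
        calc (∑ b : Fin (m + 1), M (emb m b) i * (M (emb m b) j) ^ q)
            = ∑ b : Fin (m + 1), c ^ (q + 1) *
                (T b ⟨(i : ℕ), hij.1⟩ * (T b ⟨(j : ℕ), hij.2⟩) ^ q) := by
              refine Finset.sum_congr rfl fun b _ => ?_
              rw [hfT (emb m b) i b.isLt hij.1, hfT (emb m b) j b.isLt hij.2]
              show (c * T b ⟨(i : ℕ), hij.1⟩) * (c * T b ⟨(j : ℕ), hij.2⟩) ^ q
                  = c ^ (q + 1) * (T b ⟨(i : ℕ), hij.1⟩ * (T b ⟨(j : ℕ), hij.2⟩) ^ q)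
              rw [mul_pow]
              ring
          _ = c ^ (q + 1) *
                ∑ b : Fin (m + 1), T b ⟨(i : ℕ), hij.1⟩ * (T b ⟨(j : ℕ), hij.2⟩) ^ q := by
              rw [Finset.mul_sum]
          _ = c ^ (q + 1) * (β ^ q * (if i = j then 1 else 0)) := by
              congr 1
              have h2 : (Tᵀ * T.map fun x => x ^ q) ⟨(i : ℕ), hij.1⟩ ⟨(j : ℕ), hij.2⟩
                  = (β ^ q • (1 : Matrix (Fin (m + 1)) (Fin (m + 1)) k))
                      ⟨(i : ℕ), hij.1⟩ ⟨(j : ℕ), hij.2⟩ := by rw [hTT]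
              rw [Matrix.mul_apply, Matrix.smul_apply, Matrix.one_apply, smul_eq_mul] at h2
              simp only [Matrix.transpose_apply, Matrix.map_apply] at h2
              rw [h2]
              congr 1
              by_cases hh : i = j
              · rw [if_pos (show (⟨(i : ℕ), hij.1⟩ : Fin (m + 1)) = ⟨(j : ℕ), hij.2⟩ from
                    Fin.ext (show (i : ℕ) = (j : ℕ) from congrArg Fin.val hh)), if_pos hh]
              · rw [if_neg (show ¬((⟨(i : ℕ), hij.1⟩ : Fin (m + 1)) = ⟨(j : ℕ), hij.2⟩) from
                    fun hx => hh (by rw [Fin.ext_iff] at hx ⊢; exact hx)), if_neg hh]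
          _ = c ^ (q + 1) * β ^ q * (if i = j then 1 else 0) := by ring
      have hc1 : ¬((i : ℕ) = m + 2) := by omega
      have hc2 : ¬((i : ℕ) = m + 2 ∧ (j : ℕ) = m + 1) := by omega
      rw [hs, hf2 i, if_neg hc1, zero_mul, add_zero, W_eval, if_neg hc2, add_zero]
      by_cases hh : i = j
      · rw [if_pos (show i = j ∧ (j : ℕ) < m + 1 from ⟨hh, hij.2⟩), if_pos hh]
      · rw [if_neg (show ¬(i = j ∧ (j : ℕ) < m + 1) from fun hx => hh hx.1), if_neg hh]
    · have hs : (∑ a : Fin (m + 3), if (a : ℕ) < m + 1 then M a i * (M a j) ^ q else 0)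
          = 0 := by
        refine Finset.sum_eq_zero fun a _ => ?_
        split_ifs with ha
        · rcases Nat.lt_or_ge (i : ℕ) (m + 1) with hi | hi
          · rw [hf0 a j ha (by omega), zero_pow hq0, mul_zero]
          · rw [hf0 a i ha (by omega), zero_mul]
        · rfl
      have hc3 : ¬(i = j ∧ (j : ℕ) < m + 1) := by
        rintro ⟨h1, h2⟩
        exact hij ⟨by rw [h1]; exact h2, h2⟩
      rw [hs, zero_add, hf2 i, hf1 j, W_eval, if_neg hc3, zero_add]
      by_cases h2 : (i : ℕ) = m + 2 ∧ (j : ℕ) = m + 1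
      · rw [if_pos h2.1, if_pos h2.2, if_pos h2, mul_one, mul_pow]
        ring
      · rw [if_neg h2, mul_zero]
        by_cases h3 : (i : ℕ) = m + 2
        · rw [if_pos h3, if_neg (fun hh => h2 ⟨h3, hh⟩), zero_pow hq0, mul_zero]
        · rw [if_neg h3, zero_mul]
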